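/- arXiv:math/0508112 — 2 statements merged into one kernel-verified Lean document; each statement's English description precedes it below -/
import Mathlib

section
/- For 1 ≤ k ≤ n and any integer d ≥ 0, A(n,d,k) = Σ_{j≥0} (-1)^{d-j} C(n, d-j) j^{k-1} (j+1)^{n-k}, where 0^0 = 1 and the sum is over 0 ≤ j ≤ d. -/
open Finset

/-- Number of descents of a permutation of `Fin n` (positions `i` with `π(i) > π(i+1)`). -/
def descents (n : ℕ) (π : Equiv.Perm (Fin n)) : ℕ :=
  (Finset.univ.filter (fun i : Fin n =>
    ∃ j : Fin n, (j : ℕ) = (i : ℕ) + 1 ∧ π j < π i)).card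

/-- `A n d k` : number of permutations of `{1,…,n}` with exactly `d` descents and first value `k`
(1-based values; `d : ℤ`, so `A n d k = 0` when `d < 0`). -/
def A (n : ℕ) (d : ℤ) (k : ℕ) : ℕ :=
  (Finset.univ.filter (fun π : Equiv.Perm (Fin n) =>
    (descents n π : ℤ) = d ∧ ∃ i : Fin n, (i : ℕ) = 0 ∧ (π i : ℕ) + 1 = k)).card

/-- `Alast n d k` : number with `d` descents and last value `k`. -/
def Alast (n : ℕ) (d : ℤ) (k : ℕ) : ℕ :=
  (Finset.univ.filter (fun π : Equiv.Perm (Fin n) =>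
    (descents n π : ℤ) = d ∧ ∃ i : Fin n, (i : ℕ) + 1 = n ∧ (π i : ℕ) + 1 = k)).card

/-- Eulerian number: permutations of `{1,…,n}` with `d` descents. -/
def Eul (n : ℕ) (d : ℤ) : ℕ :=
  (Finset.univ.filter (fun π : Equiv.Perm (Fin n) => (descents n π : ℤ) = d)).card


section AuxProof
open Equiv

lemma descents_succ (m : ℕ) (π : Perm (Fin (m+1))) :
    descents (m+1) π = (univ.filter (fun t : Fin m => π t.succ < π t.castSucc)).card := by
  unfold descents
  refine Finset.card_bij' (fun a ha => (⟨(a : ℕ), by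
      obtain ⟨j, hj, _⟩ := (Finset.mem_filter.mp ha).2
      have := j.isLt; omega⟩ : Fin m))
    (fun t _ => t.castSucc) ?_ ?_ ?_ ?_
  · intro a ha
    obtain ⟨j, hj1, hj2⟩ := (Finset.mem_filter.mp ha).2
    simp only [Finset.mem_filter, Finset.mem_univ, true_and]
    have h1 : (⟨(a:ℕ), by have := j.isLt; omega⟩ : Fin m).succ = j := by ext; simp [hj1]
    have h2 : ∀ h, (⟨(a:ℕ), h⟩ : Fin m).castSucc = a := by intro h; ext; simp
    rw [h2]
    convert hj2 using 2
  · intro t ht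
    simp only [Finset.mem_filter, Finset.mem_univ, true_and] at ht ⊢
    exact ⟨t.succ, by simp, ht⟩
  · intro a _; ext; simp
  · intro t _; ext; simp

def Psi {m : ℕ} (k' : Fin (m+1)) (σ : Perm (Fin m)) : Perm (Fin (m+1)) :=
  (finSuccEquiv m).trans ((σ.optionCongr).trans (finSuccEquiv' k').symm)

lemma Psi_zero {m : ℕ} (k' : Fin (m+1)) (σ : Perm (Fin m)) : Psi k' σ 0 = k' := by
  simp [Psi, finSuccEquiv'_symm_none]

lemma Psi_succ {m : ℕ} (k' : Fin (m+1)) (σ : Perm (Fin m)) (j : Fin m) :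
    Psi k' σ j.succ = k'.succAbove (σ j) := by
  simp [Psi, finSuccEquiv'_symm_some]

lemma Psi_inj {m : ℕ} (k' : Fin (m+1)) : Function.Injective (Psi k') := by
  intro σ τ h
  ext j
  have := congrArg (fun π : Perm (Fin (m+1)) => π j.succ) h
  simp only [Psi_succ] at this
  have := Fin.succAbove_right_injective (p := k') this
  exact congrArg Fin.val this

lemma Psi_surj {m : ℕ} (k' : Fin (m+1)) (π : Perm (Fin (m+1))) (hπ : π 0 = k') :
    ∃ σ : Perm (Fin m), Psi k' σ = π := by
  have hsome : ∀ j : Fin m, ((finSuccEquiv' k') (π j.succ)).isSome := by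
    intro j
    rcases h : (finSuccEquiv' k') (π j.succ) with _ | v
    · exfalso
      have : π j.succ = k' := by
        have := congrArg (finSuccEquiv' k').symm h
        simpa [finSuccEquiv'_symm_none] using this
      rw [← hπ] at this
      have := π.injective this
      exact (Fin.succ_ne_zero j) this
    · rfl
  let f : Fin m → Fin m := fun j => ((finSuccEquiv' k') (π j.succ)).get (hsome j)
  have hf : ∀ j, k'.succAbove (f j) = π j.succ := by
    intro j
    have h1 : (finSuccEquiv' k') (π j.succ) = some (f j) := by
      simp [f]
    have := congrArg (finSuccEquiv' k').symm h1
    simpa [finSuccEquiv'_symm_some] using this.symm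
  have finj : Function.Injective f := by
    intro a b hab
    have : k'.succAbove (f a) = k'.succAbove (f b) := by rw [hab]
    rw [hf, hf] at this
    have := π.injective this
    exact Fin.succ_injective _ this
  let σ : Perm (Fin m) := Equiv.ofBijective f (Finite.injective_iff_bijective.mp finj)
  refine ⟨σ, ?_⟩
  ext x
  refine Fin.cases ?_ ?_ x
  · rw [Psi_zero, hπ]
  · intro j
    rw [Psi_succ]
    show (k'.succAbove (f j) : ℕ) = _
    rw [hf]

lemma descents_Psi {m : ℕ} (k' : Fin (m+2)) (σ : Perm (Fin (m+1))) :
    descents (m+2) (Psi k' σ) =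
      descents (m+1) σ + (if (σ 0 : ℕ) < (k' : ℕ) then 1 else 0) := by
  rw [descents_succ, descents_succ, Finset.card_filter, Finset.card_filter,
    Fin.sum_univ_succ]
  have h0 : ((0 : Fin (m+1)).castSucc) = (0 : Fin (m+2)) := rfl
  have h0' : ((0 : Fin (m+1)).succ) = ((0 : Fin (m+1)) : Fin (m+1)).succ := rfl
  rw [add_comm]
  congr 1
  · -- tail
    apply Finset.sum_congr rfl
    intro s _
    have hcs : (s.succ).castSucc = (s.castSucc).succ := rfl
    rw [hcs, Psi_succ, Psi_succ]
    simp only [Fin.succAbove_lt_succAbove_iff]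
  · -- head term
    have e1 : Psi k' σ ((0:Fin (m+1)).succ) = k'.succAbove (σ 0) := Psi_succ k' σ 0
    rw [h0, e1, Psi_zero]
    have hiff : k'.succAbove (σ 0) < k' ↔ (σ 0 : ℕ) < (k' : ℕ) := by
      rw [Fin.succAbove_lt_iff_castSucc_lt, Fin.lt_def]; simp
    simp only [hiff]


lemma exists_first_iff {n : ℕ} (π : Perm (Fin (n+1))) (k : ℕ) :
    (∃ i : Fin (n+1), (i:ℕ) = 0 ∧ (π i : ℕ) + 1 = k) ↔ (π 0 : ℕ) + 1 = k := by
  constructor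
  · rintro ⟨i, hi, h⟩
    have : i = 0 := Fin.ext hi
    rwa [this] at h
  · intro h; exact ⟨0, rfl, h⟩

lemma A_rec (r k : ℕ) (hk1 : 1 ≤ k) (hk : k ≤ r+2) (d : ℤ) :
    (A (r+2) d k : ℤ) = (∑ t ∈ range (r+2-k), (A (r+1) d (k+t) : ℤ))
      + ∑ t ∈ range (k-1), (A (r+1) (d-1) (t+1) : ℤ) := by
  set k' : Fin (r+2) := ⟨k-1, by omega⟩ with hk'
  have hk'v : (k' : ℕ) = k - 1 := rfl
  set Q : Perm (Fin (r+1)) → Prop := fun σ =>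
    (descents (r+1) σ : ℤ) + (if (σ 0 : ℕ) + 1 < k then 1 else 0) = d with hQ
  have h1 : A (r+2) d k = (univ.filter Q).card := by
    unfold A
    refine (Finset.card_bij (fun σ _ => Psi k' σ) ?_ ?_ ?_).symm
    · intro σ hσ
      simp only [hQ, Finset.mem_filter, Finset.mem_univ, true_and] at hσ ⊢
      constructor
      · rw [descents_Psi]
        have hcc : ((σ 0 : ℕ) + 1 < k) ↔ ((σ 0 : ℕ) < (k' : ℕ)) := by rw [hk'v]; omega
        by_cases hc : (σ 0 : ℕ) + 1 < k
        · rw [if_pos (hcc.mp hc)]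
          rw [if_pos hc] at hσ
          push_cast
          omega
        · rw [if_neg (fun h => hc (hcc.mpr h))]
          rw [if_neg hc] at hσ
          push_cast
          omega
      · exact ⟨0, rfl, by rw [Psi_zero, hk'v]; omega⟩
    · intro σ _ τ _ h
      exact Psi_inj k' h
    · intro π hπ
      simp only [Finset.mem_filter, Finset.mem_univ, true_and] at hπ
      obtain ⟨hdes, hfirst⟩ := hπ
      rw [exists_first_iff] at hfirst
      have hπ0 : π 0 = k' := by
        apply Fin.ext
        rw [hk'v]
        omega
      obtain ⟨σ, hσ⟩ := Psi_surj k' π hπ0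
      refine ⟨σ, ?_, hσ⟩
      simp only [hQ, Finset.mem_filter, Finset.mem_univ, true_and]
      have hd := descents_Psi k' σ
      rw [hσ] at hd
      have hσ0 : (σ 0 : ℕ) < (k' : ℕ) ↔ (σ 0 : ℕ) + 1 < k := by rw [hk'v]; omega
      by_cases hc : (σ 0 : ℕ) + 1 < k
      · rw [if_pos hc]
        rw [if_pos (hσ0.mpr hc)] at hd
        push_cast
        omega
      · rw [if_neg hc]
        rw [if_neg (fun h => hc (hσ0.mp h))] at hd
        push_cast
        omega
  have h2 : (univ.filter Q).card
      = ∑ m' ∈ range (r+1), (univ.filter (fun σ => Q σ ∧ (σ 0 : ℕ) = m')).card := by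
    rw [Finset.card_eq_sum_card_fiberwise
      (f := fun σ : Perm (Fin (r+1)) => ((σ 0 : Fin (r+1)) : ℕ)) (t := range (r+1))
      (fun σ _ => by simp [Fin.is_lt, Fin.is_le])]
    exact Finset.sum_congr rfl fun m' _ => by rw [Finset.filter_filter]
  have h3 : ∀ m', (univ.filter (fun σ => Q σ ∧ (σ 0 : ℕ) = m')).card
      = A (r+1) (d - (if m' + 1 < k then 1 else 0)) (m'+1) := by
    intro m'
    unfold A
    congr 1
    apply Finset.filter_congr
    intro σ _
    rw [exists_first_iff]
    simp only [hQ]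
    have hiff : ((σ 0 : ℕ) + 1 = m' + 1) ↔ ((σ 0 : ℕ) = m') := by omega
    rw [hiff]
    constructor
    · rintro ⟨hq, h0⟩
      rw [h0] at hq
      exact ⟨by split_ifs at hq ⊢ <;> omega, h0⟩
    · rintro ⟨hdes, h0⟩
      rw [h0]
      exact ⟨by split_ifs at hdes ⊢ <;> omega, rfl⟩
  rw [h1, h2]
  rw [Finset.sum_congr rfl (fun m' _ => h3 m')]
  push_cast
  have hsplit : r + 1 = (k-1) + (r+2-k) := by omega
  rw [hsplit, Finset.sum_range_add]
  rw [add_comm]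
  congr 1
  · apply Finset.sum_congr rfl
    intro i hi
    simp only [Finset.mem_range] at hi
    have h1' : k - 1 + i + 1 = k + i := by omega
    rw [h1', if_neg (by omega : ¬ k + i < k), sub_zero]
  · apply Finset.sum_congr rfl
    intro m' hm'
    simp only [Finset.mem_range] at hm'
    rw [if_pos (by omega)]


def F (n d k : ℕ) : ℤ :=
  ∑ j ∈ Finset.range (d + 1),
    (-1 : ℤ) ^ (d - j) * (n.choose (d - j) : ℤ) * (j : ℤ) ^ (k - 1) * ((j : ℤ) + 1) ^ (n - k)

def F' (n d k : ℕ) : ℤ :=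
  ∑ j ∈ Finset.range d,
    (-1 : ℤ) ^ (d - 1 - j) * (n.choose (d - 1 - j) : ℤ) * (j : ℤ) ^ (k - 1) * ((j : ℤ) + 1) ^ (n - k)

lemma F'_zero (n k : ℕ) : F' n 0 k = 0 := by simp [F']

lemma F'_succ (n e k : ℕ) : F' n (e+1) k = F n e k := by
  unfold F F'
  apply Finset.sum_congr rfl
  intro j _
  norm_num

lemma geom (x : ℤ) (N : ℕ) : ∑ t ∈ range N, x ^ t * (x + 1) ^ (N - 1 - t) = (x + 1) ^ N - x ^ N := by
  have h := geom_sum₂_mul x (x + 1) N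
  have h2 : x - (x + 1) = -1 := by ring
  rw [h2] at h
  linarith

lemma ALG (r k d : ℕ) (hk1 : 1 ≤ k) (hk : k ≤ r + 2) :
    F (r+2) d k = (∑ t ∈ range (r+2-k), F (r+1) d (k+t)) + ∑ t ∈ range (k-1), F' (r+1) d (t+1) := by
  set N : ℕ := r + 2 - k with hN
  -- first double sum
  have e1 : (∑ t ∈ range N, F (r+1) d (k+t))
      = ∑ j ∈ range (d+1), (-1:ℤ)^(d-j) * ((r+1).choose (d-j) : ℤ) *
          ((j:ℤ)^(k-1) * (((j:ℤ)+1)^N - (j:ℤ)^N)) := by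
    unfold F
    rw [Finset.sum_comm]
    apply Finset.sum_congr rfl
    intro j _
    have inner : ∀ t ∈ range N,
        (-1:ℤ)^(d-j) * ((r+1).choose (d-j) : ℤ) * (j:ℤ)^(k+t-1) * ((j:ℤ)+1)^(r+1-(k+t))
        = ((-1:ℤ)^(d-j) * ((r+1).choose (d-j) : ℤ) * (j:ℤ)^(k-1)) * ((j:ℤ)^t * ((j:ℤ)+1)^(N-1-t)) := by
      intro t ht
      simp only [Finset.mem_range] at ht
      have h1 : k + t - 1 = (k-1) + t := by omega
      have h2 : r + 1 - (k + t) = N - 1 - t := by omega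
      rw [h1, h2, pow_add]
      ring
    rw [Finset.sum_congr rfl inner, ← Finset.mul_sum, geom]
    ring
  -- second double sum
  have e2 : (∑ t ∈ range (k-1), F' (r+1) d (t+1))
      = ∑ j ∈ range d, (-1:ℤ)^(d-1-j) * ((r+1).choose (d-1-j) : ℤ) *
          ((((j:ℤ)+1)^N) * ((((j:ℤ)+1))^(k-1) - (j:ℤ)^(k-1))) := by
    unfold F'
    rw [Finset.sum_comm]
    apply Finset.sum_congr rfl
    intro j _
    have inner : ∀ t ∈ range (k-1),
        (-1:ℤ)^(d-1-j) * ((r+1).choose (d-1-j) : ℤ) * (j:ℤ)^(t+1-1) * ((j:ℤ)+1)^(r+1-(t+1))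
        = ((-1:ℤ)^(d-1-j) * ((r+1).choose (d-1-j) : ℤ) * ((j:ℤ)+1)^N) * ((j:ℤ)^t * ((j:ℤ)+1)^((k-1)-1-t)) := by
      intro t ht
      simp only [Finset.mem_range] at ht
      have h1 : t + 1 - 1 = t := by omega
      have h2 : r + 1 - (t+1) = N + ((k-1) - 1 - t) := by omega
      rw [h1, h2, pow_add]
      ring
    rw [Finset.sum_congr rfl inner, ← Finset.mul_sum, geom]
    ring
  rw [e1, e2]
  -- expand products
  have e3 : ∑ j ∈ range (d+1), (-1:ℤ)^(d-j) * ((r+1).choose (d-j) : ℤ) *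
          ((j:ℤ)^(k-1) * (((j:ℤ)+1)^N - (j:ℤ)^N))
      = (∑ j ∈ range (d+1), (-1:ℤ)^(d-j) * ((r+1).choose (d-j) : ℤ) * ((j:ℤ)^(k-1) * ((j:ℤ)+1)^N))
        - ∑ j ∈ range (d+1), (-1:ℤ)^(d-j) * ((r+1).choose (d-j) : ℤ) * (j:ℤ)^(r+1) := by
    rw [← Finset.sum_sub_distrib]
    apply Finset.sum_congr rfl
    intro j _
    have h1 : (j:ℤ)^(k-1) * (j:ℤ)^N = (j:ℤ)^(r+1) := by
      rw [← pow_add]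
      congr 1
      omega
    rw [mul_sub, ← mul_assoc, ← h1]
    ring
  have e4 : ∑ j ∈ range d, (-1:ℤ)^(d-1-j) * ((r+1).choose (d-1-j) : ℤ) *
          ((((j:ℤ)+1)^N) * ((((j:ℤ)+1))^(k-1) - (j:ℤ)^(k-1)))
      = (∑ j ∈ range d, (-1:ℤ)^(d-1-j) * ((r+1).choose (d-1-j) : ℤ) * ((j:ℤ)+1)^(r+1))
        - ∑ j ∈ range d, (-1:ℤ)^(d-1-j) * ((r+1).choose (d-1-j) : ℤ) * ((j:ℤ)^(k-1) * ((j:ℤ)+1)^N) := by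
    rw [← Finset.sum_sub_distrib]
    apply Finset.sum_congr rfl
    intro j _
    have h1 : ((j:ℤ)+1)^N * ((j:ℤ)+1)^(k-1) = ((j:ℤ)+1)^(r+1) := by
      rw [← pow_add]
      congr 1
      omega
    rw [mul_sub, ← mul_assoc, ← h1]
    ring
  rw [e3, e4]
  -- cancellation of the two power sums
  have e5 : ∑ j ∈ range (d+1), (-1:ℤ)^(d-j) * ((r+1).choose (d-j) : ℤ) * (j:ℤ)^(r+1)
      = ∑ j ∈ range d, (-1:ℤ)^(d-1-j) * ((r+1).choose (d-1-j) : ℤ) * ((j:ℤ)+1)^(r+1) := by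
    rw [Finset.sum_range_succ']
    have h0 : ((0:ℕ):ℤ)^(r+1) = 0 := by
      norm_num
    rw [h0]
    simp only [mul_zero, add_zero]
    apply Finset.sum_congr rfl
    intro j _
    have h1 : d - (j+1) = d - 1 - j := by omega
    push_cast
    rw [h1]
  rw [e5]
  -- now the main combination
  have key : F (r+2) d k
      = (∑ j ∈ range (d+1), (-1:ℤ)^(d-j) * ((r+1).choose (d-j) : ℤ) * ((j:ℤ)^(k-1) * ((j:ℤ)+1)^N))
        - ∑ j ∈ range d, (-1:ℤ)^(d-1-j) * ((r+1).choose (d-1-j) : ℤ) * ((j:ℤ)^(k-1) * ((j:ℤ)+1)^N) := by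
    unfold F
    have hnk : r + 2 - k = N := rfl
    rw [Finset.sum_range_succ, Finset.sum_range_succ]
    have hlast : (-1:ℤ)^(d-d) * (((r+2).choose (d-d)) : ℤ) * (d:ℤ)^(k-1) * ((d:ℤ)+1)^(r+2-k)
        = (-1:ℤ)^(d-d) * (((r+1).choose (d-d)) : ℤ) * ((d:ℤ)^(k-1) * ((d:ℤ)+1)^N) := by
      simp only [Nat.sub_self, pow_zero, Nat.choose_zero_right, Nat.cast_one, hnk]
      ring
    rw [hlast]
    have main : ∑ x ∈ range d, (-1:ℤ)^(d-x) * (((r+2).choose (d-x)) : ℤ) * (x:ℤ)^(k-1) * ((x:ℤ)+1)^(r+2-k)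
        = ∑ x ∈ range d, ((-1:ℤ)^(d-x) * (((r+1).choose (d-x)) : ℤ) * ((x:ℤ)^(k-1) * ((x:ℤ)+1)^N)
            - (-1:ℤ)^(d-1-x) * (((r+1).choose (d-1-x)) : ℤ) * ((x:ℤ)^(k-1) * ((x:ℤ)+1)^N)) := by
      apply Finset.sum_congr rfl
      intro j hj
      simp only [Finset.mem_range] at hj
      have h1 : d - j = (d - j - 1) + 1 := by omega
      have h2 : d - 1 - j = d - j - 1 := by omega
      have hpascal : ((r+2).choose (d-j)) = ((r+1).choose (d-j-1)) + ((r+1).choose (d-j)) :=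
        calc (r+2).choose (d-j) = (r+2).choose ((d-j-1)+1) := by rw [← h1]
          _ = (r+1).choose (d-j-1) + (r+1).choose ((d-j-1)+1) := Nat.choose_succ_succ _ _
          _ = (r+1).choose (d-j-1) + (r+1).choose (d-j) := by rw [← h1]
      have hsign : (-1:ℤ)^(d-j) = -(-1:ℤ)^(d-1-j) := by
        rw [h2]
        conv_lhs => rw [h1]
        rw [pow_succ]
        ring
      rw [hpascal, h2, hnk]
      push_cast
      rw [hsign, h2]
      ring
    rw [main, Finset.sum_sub_distrib]
    ring
  rw [key]
  ring


lemma A_neg (n : ℕ) (d : ℤ) (k : ℕ) (hd : d < 0) : A n d k = 0 := by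
  unfold A
  rw [Finset.card_eq_zero]
  apply Finset.filter_false_of_mem
  intro π _
  rintro ⟨h1, -⟩
  have : (0:ℤ) ≤ (descents n π : ℤ) := Int.natCast_nonneg _
  omega

lemma A_one (d : ℤ) : A 1 d 1 = if d = 0 then 1 else 0 := by
  unfold A
  have hdes : ∀ π : Perm (Fin 1), descents 1 π = 0 := by
    intro π
    unfold descents
    rw [Finset.card_eq_zero]
    apply Finset.filter_false_of_mem
    intro i _
    rintro ⟨j, hj, -⟩
    have h1 : (j : ℕ) = 0 := by omega
    have h2 : (i : ℕ) = 0 := by omega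
    omega
  have hp : ∀ π : Perm (Fin 1), ((descents 1 π : ℤ) = d ∧
      ∃ i : Fin 1, (i : ℕ) = 0 ∧ (π i : ℕ) + 1 = 1) ↔ (0 : ℤ) = d := by
    intro π
    rw [hdes]
    simp only [Nat.cast_zero, and_iff_left_iff_imp]
    intro _
    exact ⟨0, rfl, by omega⟩
  rw [Finset.filter_congr (fun π _ => hp π)]
  split_ifs with h
  · subst h
    simp [Finset.filter_true_of_mem]
  · rw [Finset.card_eq_zero]
    apply Finset.filter_false_of_mem
    intro π _
    omega

lemma alt_sum (d : ℕ) :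
    ∑ j ∈ range (d+1), (-1:ℤ)^j * ((Nat.choose 1 j) : ℤ) = if d = 0 then 1 else 0 := by
  induction d with
  | zero => simp
  | succ e ih =>
    rw [Finset.sum_range_succ, ih]
    rcases e with _ | e'
    · norm_num
    · rw [if_neg (by omega), if_neg (by omega)]
      rw [Nat.choose_eq_zero_of_lt (by omega)]
      norm_num

lemma F_one (d : ℕ) : F 1 d 1 = if d = 0 then 1 else 0 := by
  unfold F
  have h1 : ∀ j ∈ range (d+1), (-1:ℤ)^(d-j) * ((Nat.choose 1 (d-j)) : ℤ) * (j:ℤ)^(1-1) * ((j:ℤ)+1)^(1-1)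
      = (-1:ℤ)^(d-j) * ((Nat.choose 1 (d-j)) : ℤ) := by
    intro j _
    norm_num
  rw [Finset.sum_congr rfl h1]
  have h2 : ∑ j ∈ range (d+1), (-1:ℤ)^(d-j) * ((Nat.choose 1 (d-j)) : ℤ)
      = ∑ j ∈ range (d+1), (-1:ℤ)^j * ((Nat.choose 1 j) : ℤ) := by
    rw [← Finset.sum_range_reflect]
    apply Finset.sum_congr rfl
    intro j hj
    simp only [Finset.mem_range] at hj
    have h3 : d - (d + 1 - 1 - j) = j := by omega
    rw [h3]
  rw [h2, alt_sum]

lemma main_lemma : ∀ n, ∀ k, 1 ≤ k → k ≤ n → ∀ d : ℕ, ((A n (d:ℤ) k : ℕ) : ℤ) = F n d k := by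
  intro n
  induction n with
  | zero => intro k h1 h2 d; omega
  | succ m ih =>
    rcases m with _ | r
    · intro k h1 h2 d
      have hk : k = 1 := by omega
      subst hk
      rw [A_one, F_one]
      by_cases hd : d = 0 <;> simp [hd]
    · intro k h1 h2 d
      rw [A_rec r k h1 h2 (d:ℤ), ALG r k d h1 h2]
      congr 1
      · apply Finset.sum_congr rfl
        intro t ht
        simp only [Finset.mem_range] at ht
        exact ih (k+t) (by omega) (by omega) d
      · rcases d with _ | e
        · apply Finset.sum_congr rfl
          intro t ht
          rw [F'_zero]
          rw [A_neg _ _ _ (by norm_num : ((0:ℕ):ℤ) - 1 < 0)]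
          norm_num
        · apply Finset.sum_congr rfl
          intro t ht
          simp only [Finset.mem_range] at ht
          rw [F'_succ]
          have hcast : ((e+1:ℕ):ℤ) - 1 = ((e:ℕ):ℤ) := by push_cast; ring
          rw [hcast]
          exact ih (t+1) (by omega) (by omega) e

end AuxProof

theorem stmt6 (n : ℕ) (d : ℕ) (k : ℕ) (hk1 : 1 ≤ k) (hkn : k ≤ n) :
    (A n (d : ℤ) k : ℤ) =
      ∑ j ∈ Finset.range (d + 1),
        (-1 : ℤ) ^ (d - j) * (n.choose (d - j) : ℤ) * (j : ℤ) ^ (k - 1) * ((j : ℤ) + 1) ^ (n - k) := by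
  exact main_lemma n k hk1 hkn d
end

section
/- For 0 ≤ d ≤ n-1 and m ≥ 1, A(n,d)·E[π(1)^{\overline{m}}] = m! Σ_{j≥0} (-1)^{d-j} C(n, d-j) Σ_{ℓ=0}^{n-1} C(m+n, ℓ) j^{ℓ}, where x^{\overline{m}} = x(x+1)···(x+m-1) and E is over π uniform on permutations with d descents. -/
open Finset

/-- The "insert first value `c`" bijection. -/
def theta {N : ℕ} (c : Fin (N+1)) (σ : Equiv.Perm (Fin N)) : Equiv.Perm (Fin (N+1)) :=
  ((finSuccEquiv' (0 : Fin (N+1))).trans (Equiv.optionCongr σ)).trans (finSuccEquiv' c).symm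

@[simp] lemma theta_zero {N : ℕ} (c : Fin (N+1)) (σ : Equiv.Perm (Fin N)) :
    theta c σ 0 = c := by
  simp [theta]

@[simp] lemma theta_succ {N : ℕ} (c : Fin (N+1)) (σ : Equiv.Perm (Fin N)) (i : Fin N) :
    theta c σ i.succ = c.succAbove (σ i) := by
  have h0 : (0 : Fin (N+1)).succAbove i = i.succ := Fin.succAbove_zero ▸ rfl
  simp only [theta, Equiv.trans_apply, ← h0, finSuccEquiv'_succAbove,
    Equiv.optionCongr_apply, Option.map_some, finSuccEquiv'_symm_some]

def thetaFull {N : ℕ} : Fin (N+1) × Equiv.Perm (Fin N) ≃ Equiv.Perm (Fin (N+1)) where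
  toFun p := theta p.1 p.2
  invFun π := (π 0, Equiv.removeNone
    (((finSuccEquiv' (0 : Fin (N+1))).symm.trans (π.trans (finSuccEquiv' (π 0)))) ))
  left_inv p := by
    obtain ⟨c, σ⟩ := p
    have h0 : theta c σ 0 = c := theta_zero c σ
    simp only [h0, Prod.mk.injEq, true_and]
    have : ((finSuccEquiv' (0 : Fin (N+1))).symm.trans ((theta c σ).trans (finSuccEquiv' c)))
        = Equiv.optionCongr σ := by
      ext x
      simp [theta]
    rw [this, Equiv.removeNone_optionCongr]
  right_inv π := by
    ext x
    refine Fin.cases ?_ (fun i => ?_) x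
    · simp
    · rw [theta_succ]
      set E := ((finSuccEquiv' (0 : Fin (N+1))).symm.trans (π.trans (finSuccEquiv' (π 0))))
      have hE : E (some i) = finSuccEquiv' (π 0) (π i.succ) := by
        simp [E, Fin.succAbove]
      have hne : E (some i) ≠ none := by
        rw [hE]
        simp only [ne_eq]
        intro h
        have := (finSuccEquiv' (π 0)).injective (h.trans (finSuccEquiv'_at (π 0)).symm)
        exact (Fin.succ_ne_zero i) (π.injective this)
      obtain ⟨b, hb⟩ := Option.ne_none_iff_exists'.mp hne
      have hrb : Equiv.removeNone E i = b := by
        have := Equiv.removeNone_some E ⟨b, hb⟩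
        rw [hb] at this; exact Option.some_injective _ this
      rw [hrb]
      have : (finSuccEquiv' (π 0)).symm (E (some i)) = (π 0).succAbove b := by
        rw [hb]; simp
      rw [hE] at this
      rw [Equiv.symm_apply_apply] at this
      exact congrArg Fin.val this.symm
lemma succAbove_lt_self_iff {N : ℕ} (c : Fin (N+1)) (x : Fin N) :
    c.succAbove x < c ↔ (x : ℕ) < (c : ℕ) := by
  rcases lt_or_ge (Fin.castSucc x) c with h | h
  · rw [Fin.succAbove_of_castSucc_lt _ _ h]
    have : ((Fin.castSucc x : Fin (N+1)) : ℕ) = (x : ℕ) := rfl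
    rw [Fin.lt_def, this]
  · rw [Fin.succAbove_of_le_castSucc _ _ h]
    rw [Fin.le_def] at h
    have hx : ((Fin.castSucc x : Fin (N+1)) : ℕ) = (x : ℕ) := rfl
    rw [hx] at h
    constructor
    · intro hlt
      rw [Fin.lt_def, Fin.val_succ] at hlt
      omega
    · intro hlt; omega

lemma descents_theta {N : ℕ} (c : Fin (N+2)) (σ : Equiv.Perm (Fin (N+1))) :
    descents (N+2) (theta c σ)
      = (if ((σ 0 : ℕ) < (c : ℕ)) then 1 else 0) + descents (N+1) σ := by
  unfold descents
  rw [Finset.card_filter, Finset.card_filter, Fin.sum_univ_succ]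
  congr 1
  · have hiff : (∃ j : Fin (N+2), (j : ℕ) = ((0 : Fin (N+2)) : ℕ) + 1 ∧
        theta c σ j < theta c σ 0) ↔ (σ 0 : ℕ) < (c : ℕ) := by
      constructor
      · rintro ⟨j, hj, hlt⟩
        have hj' : j = Fin.succ (0 : Fin (N+1)) := by
          apply Fin.ext; simpa using hj
        subst hj'
        rw [theta_succ, theta_zero] at hlt
        exact (succAbove_lt_self_iff c (σ 0)).mp hlt
      · intro h
        refine ⟨Fin.succ (0 : Fin (N+1)), by simp, ?_⟩
        rw [theta_succ, theta_zero]
        exact (succAbove_lt_self_iff c (σ 0)).mpr h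
    rw [if_congr hiff rfl rfl]
  · apply Finset.sum_congr rfl
    intro i _
    have hiff : (∃ j : Fin (N+2), (j : ℕ) = ((i.succ : Fin (N+2)) : ℕ) + 1 ∧
        theta c σ j < theta c σ i.succ) ↔
        (∃ j : Fin (N+1), (j : ℕ) = (i : ℕ) + 1 ∧ σ j < σ i) := by
      constructor
      · rintro ⟨j, hj, hlt⟩
        rw [Fin.val_succ] at hj
        refine Fin.cases ?_ (fun j' => ?_) j hj hlt
        · intro hj _; simp at hj
        · intro hj hlt
          rw [Fin.val_succ] at hj
          rw [theta_succ, theta_succ] at hlt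
          exact ⟨j', by omega, Fin.succAbove_lt_succAbove_iff.mp hlt⟩
      · rintro ⟨j', hj', hlt⟩
        refine ⟨j'.succ, by simp [hj'], ?_⟩
        rw [theta_succ, theta_succ]
        exact Fin.succAbove_lt_succAbove_iff.mpr hlt
    rw [if_congr hiff rfl rfl]
/-- weighted descent-generating sum: `Ff n m d = Σ_{π ∈ S_{n+1}, des π = d} C(π(0)+m, m)`. -/
def Ff (n m : ℕ) (d : ℤ) : ℤ :=
  ∑ π : Equiv.Perm (Fin (n+1)),
    if (descents (n+1) π : ℤ) = d then ((((π 0 : Fin (n+1)) : ℕ) + m).choose m : ℤ) else 0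

lemma Ff_neg (n m : ℕ) (d : ℤ) (hd : d < 0) : Ff n m d = 0 := by
  unfold Ff
  apply Finset.sum_eq_zero
  intro π _
  rw [if_neg]
  intro h
  omega

lemma Ff_base (m : ℕ) (d : ℤ) : Ff 0 m d = if d = 0 then 1 else 0 := by
  unfold Ff
  have hdes : ∀ π : Equiv.Perm (Fin 1), descents 1 π = 0 := by
    intro π
    unfold descents
    rw [Finset.card_eq_zero, Finset.filter_eq_empty_iff]
    rintro i -
    rintro ⟨j, hj, -⟩
    omega
  have hπ0 : ∀ π : Equiv.Perm (Fin 1), ((π 0 : Fin 1) : ℕ) = 0 := by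
    intro π; omega
  rw [Finset.sum_congr rfl (fun π _ => by rw [hdes π, hπ0 π])]
  simp only [Nat.cast_zero, Nat.zero_add, Nat.choose_self, Nat.cast_one]
  rw [Finset.sum_const]
  have : Fintype.card (Equiv.Perm (Fin 1)) = 1 := by simp [Fintype.card_perm]
  rw [Finset.card_univ, this]
  have : (0:ℤ) = d ↔ d = 0 := by omega
  rw [if_congr this rfl rfl]
  split_ifs <;> simp
lemma sum_choose_range (t m : ℕ) :
    ∑ c ∈ Finset.range (t+1), (c+m).choose m = (t+m+1).choose (m+1) := by
  rw [← Nat.sum_Icc_choose (t+m) m]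
  rw [show Finset.Icc m (t+m) = Finset.Ico m (t+m+1) from (Finset.Ico_add_one_right_eq_Icc ..).symm]
  rw [Finset.sum_Ico_eq_sum_range]
  rw [show t + m + 1 - m = t + 1 by omega]
  exact Finset.sum_congr rfl (fun c _ => by rw [Nat.add_comm m c])

lemma sum_le_part (n m s : ℕ) (hs : s < n + 2) :
    ∑ c : Fin (n+2), (if s < (c : ℕ) then 0 else (((c : ℕ)+m).choose m : ℤ))
      = ((s+m+1).choose (m+1) : ℤ) := by
  rw [Fin.sum_univ_eq_sum_range (fun c => if s < c then 0 else ((c+m).choose m : ℤ)) (n+2)]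
  have h1 : ∀ c ∈ Finset.range (n+2),
      (if s < c then 0 else ((c+m).choose m : ℤ)) = if c ≤ s then ((c+m).choose m : ℤ) else 0 := by
    intro c _
    split_ifs <;> first | rfl | omega
  rw [Finset.sum_congr rfl h1, ← Finset.sum_filter]
  rw [show Finset.filter (fun c => c ≤ s) (Finset.range (n+2)) = Finset.range (s+1) by
    ext c; simp; omega]
  rw [show (((s+m+1).choose (m+1) : ℕ) : ℤ) = (((s+m+1).choose (m+1) : ℕ) : ℤ) from rfl]
  rw [← sum_choose_range s m]
  push_cast
  rfl

lemma sum_total (n m : ℕ) :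
    ∑ c : Fin (n+2), (((c : ℕ)+m).choose m : ℤ) = ((n+m+2).choose (m+1) : ℤ) := by
  rw [Fin.sum_univ_eq_sum_range (fun c => ((c+m).choose m : ℤ)) (n+2)]
  rw [show (n+2) = (n+1)+1 from rfl]
  rw [show (n+m+2) = (n+1)+m+1 by omega]
  rw [← sum_choose_range (n+1) m]
  push_cast
  rfl
lemma Ff_rec (n m : ℕ) (d : ℤ) :
    Ff (n+1) m d = ((n+m+2).choose (m+1) : ℤ) * Ff n 0 (d-1)
      + Ff n (m+1) d - Ff n (m+1) (d-1) := by
  have hmain : Ff (n+1) m d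
      = ∑ σ : Equiv.Perm (Fin (n+1)), ∑ c : Fin (n+2),
          ((if (descents (n+1) σ : ℤ) = d - 1 then 1 else 0)
              * (if ((σ 0 : Fin (n+1)) : ℕ) < (c : ℕ) then (((c : ℕ)+m).choose m : ℤ) else 0)
            + (if (descents (n+1) σ : ℤ) = d then 1 else 0)
              * (if ((σ 0 : Fin (n+1)) : ℕ) < (c : ℕ) then 0 else (((c : ℕ)+m).choose m : ℤ))) := by
    unfold Ff
    rw [← Equiv.sum_comp (thetaFull : Fin (n+2) × Equiv.Perm (Fin (n+1)) ≃ Equiv.Perm (Fin (n+2)))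
      (fun π => if (descents (n+2) π : ℤ) = d
        then ((((π 0 : Fin (n+2)) : ℕ) + m).choose m : ℤ) else 0)]
    rw [Fintype.sum_prod_type]
    rw [Finset.sum_comm]
    apply Finset.sum_congr rfl
    intro σ _
    apply Finset.sum_congr rfl
    intro c _
    show (if (descents (n+2) (theta c σ) : ℤ) = d
        then (((theta c σ 0 : Fin (n+2)) : ℕ) + m).choose m else 0 : ℤ) = _
    rw [descents_theta, theta_zero]
    by_cases h1 : ((σ 0 : Fin (n+1)) : ℕ) < (c : ℕ)
    · rw [if_pos h1, if_pos h1, if_pos h1]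
      push_cast
      split_ifs <;> first | (exfalso; omega) | ring
    · rw [if_neg h1, if_neg h1, if_neg h1]
      push_cast
      split_ifs <;> first | (exfalso; omega) | ring
  rw [hmain]
  have hinner : ∀ σ : Equiv.Perm (Fin (n+1)),
      ∑ c : Fin (n+2),
          ((if (descents (n+1) σ : ℤ) = d - 1 then 1 else 0)
              * (if ((σ 0 : Fin (n+1)) : ℕ) < (c : ℕ) then (((c : ℕ)+m).choose m : ℤ) else 0)
            + (if (descents (n+1) σ : ℤ) = d then 1 else 0)
              * (if ((σ 0 : Fin (n+1)) : ℕ) < (c : ℕ) then 0 else (((c : ℕ)+m).choose m : ℤ)))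
      = (if (descents (n+1) σ : ℤ) = d - 1 then 1 else 0)
          * (((n+m+2).choose (m+1) : ℤ) - ((((σ 0 : Fin (n+1)) : ℕ)+m+1).choose (m+1) : ℤ))
        + (if (descents (n+1) σ : ℤ) = d then 1 else 0)
          * ((((σ 0 : Fin (n+1)) : ℕ)+m+1).choose (m+1) : ℤ) := by
    intro σ
    have hs : ((σ 0 : Fin (n+1)) : ℕ) < n + 2 := by
      have := (σ 0).isLt; omega
    rw [Finset.sum_add_distrib, ← Finset.mul_sum, ← Finset.mul_sum]
    congr 2
    · have hsplit : ∀ c : Fin (n+2),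
          (if ((σ 0 : Fin (n+1)) : ℕ) < (c : ℕ) then (((c : ℕ)+m).choose m : ℤ) else 0)
          = (((c : ℕ)+m).choose m : ℤ)
            - (if ((σ 0 : Fin (n+1)) : ℕ) < (c : ℕ) then 0 else (((c : ℕ)+m).choose m : ℤ)) := by
        intro c; split_ifs <;> ring
      rw [Finset.sum_congr rfl (fun c _ => hsplit c), Finset.sum_sub_distrib,
        sum_total n m, sum_le_part n m _ hs]
    · exact sum_le_part n m _ hs
  rw [Finset.sum_congr rfl (fun σ _ => hinner σ)]
  unfold Ff
  rw [Finset.sum_add_distrib]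
  have e1 : ∑ σ : Equiv.Perm (Fin (n+1)),
      (if (descents (n+1) σ : ℤ) = d - 1 then 1 else 0)
        * (((n+m+2).choose (m+1) : ℤ) - ((((σ 0 : Fin (n+1)) : ℕ)+m+1).choose (m+1) : ℤ))
      = ((n+m+2).choose (m+1) : ℤ) *
          (∑ σ : Equiv.Perm (Fin (n+1)),
            if (descents (n+1) σ : ℤ) = d - 1 then ((((σ 0 : Fin (n+1)) : ℕ) + 0).choose 0 : ℤ) else 0)
        - ∑ σ : Equiv.Perm (Fin (n+1)),
            (if (descents (n+1) σ : ℤ) = d - 1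
              then ((((σ 0 : Fin (n+1)) : ℕ) + (m+1)).choose (m+1) : ℤ) else 0) := by
    rw [Finset.mul_sum, ← Finset.sum_sub_distrib]
    apply Finset.sum_congr rfl
    intro σ _
    have : (((σ 0 : Fin (n+1)) : ℕ) + 0).choose 0 = 1 := Nat.choose_zero_right _
    rw [this]
    have h2 : ((σ 0 : Fin (n+1)) : ℕ) + (m+1) = ((σ 0 : Fin (n+1)) : ℕ) + m + 1 := rfl
    rw [h2]
    split_ifs <;> push_cast <;> ring
  have e2 : ∑ σ : Equiv.Perm (Fin (n+1)),
      (if (descents (n+1) σ : ℤ) = d then 1 else 0)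
        * ((((σ 0 : Fin (n+1)) : ℕ)+m+1).choose (m+1) : ℤ)
      = ∑ σ : Equiv.Perm (Fin (n+1)),
          (if (descents (n+1) σ : ℤ) = d
            then ((((σ 0 : Fin (n+1)) : ℕ) + (m+1)).choose (m+1) : ℤ) else 0) := by
    apply Finset.sum_congr rfl
    intro σ _
    have h2 : ((σ 0 : Fin (n+1)) : ℕ) + (m+1) = ((σ 0 : Fin (n+1)) : ℕ) + m + 1 := rfl
    rw [h2]
    split_ifs <;> ring
  rw [e1, e2]
  ring

def Tw (n m j : ℕ) : ℤ := ∑ ℓ ∈ Finset.range n, ((m+n).choose ℓ : ℤ) * (j:ℤ)^ℓ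

def Gg (n m d : ℕ) : ℤ :=
  ∑ i ∈ Finset.range (d+1), (-1:ℤ)^i * (n.choose i : ℤ) * Tw n m (d - i)

lemma pascal_sum (N e : ℕ) (f : ℕ → ℤ) :
    ∑ i ∈ Finset.range (e+2), (-1:ℤ)^i * ((N+1).choose i : ℤ) * f (e+1-i)
      = ∑ i ∈ Finset.range (e+2), (-1:ℤ)^i * (N.choose i : ℤ) * f (e+1-i)
        - ∑ i ∈ Finset.range (e+1), (-1:ℤ)^i * (N.choose i : ℤ) * f (e-i) := by
  rw [Finset.sum_range_succ' (fun i => (-1:ℤ)^i * ((N+1).choose i : ℤ) * f (e+1-i)) (e+1)]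
  rw [Finset.sum_range_succ' (fun i => (-1:ℤ)^i * (N.choose i : ℤ) * f (e+1-i)) (e+1)]
  have hcomb : ∀ i ∈ Finset.range (e+1),
      (-1:ℤ)^(i+1) * ((N+1).choose (i+1) : ℤ) * f (e+1-(i+1))
        = ((-1:ℤ)^(i+1) * (N.choose (i+1) : ℤ) * f (e+1-(i+1)))
          - (-1:ℤ)^i * (N.choose i : ℤ) * f (e-i) := by
    intro i _
    have h1 : e + 1 - (i+1) = e - i := by omega
    rw [h1, Nat.choose_succ_succ]
    push_cast
    ring
  rw [Finset.sum_congr rfl hcomb, Finset.sum_sub_distrib]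
  simp only [Nat.choose_zero_right]
  push_cast
  ring

lemma Tw_split (K m j : ℕ) :
    Tw (K+2) m j = Tw (K+1) (m+1) j + ((m+K+2).choose (K+1) : ℤ) * (j:ℤ)^(K+1) := by
  unfold Tw
  rw [Finset.sum_range_succ]
  congr 1
  · apply Finset.sum_congr rfl
    intro ℓ _
    have h : m + (K+2) = m+1+(K+1) := by omega
    rw [h]

lemma Tw_zero_arg (n m : ℕ) : Tw (n+1) m 0 = 1 := by
  unfold Tw
  push_cast
  rw [Finset.sum_range_succ' (fun ℓ => ((m+(n+1)).choose ℓ : ℤ) * (0:ℤ)^ℓ) n]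
  simp

lemma Gg_zero (n m : ℕ) : Gg (n+1) m 0 = 1 := by
  unfold Gg
  simp [Tw_zero_arg]

lemma Tw_one (m j : ℕ) : Tw 1 m j = 1 := by
  unfold Tw
  simp

lemma Gg_one (m d : ℕ) : Gg 1 m d = if d = 0 then 1 else 0 := by
  unfold Gg
  rw [Finset.sum_congr rfl (fun i _ => by rw [Tw_one, mul_one])]
  induction d with
  | zero => simp
  | succ e ih =>
    rw [Finset.sum_range_succ, ih]
    cases e with
    | zero => simp [Nat.choose]
    | succ f =>
      rw [Nat.choose_eq_zero_of_lt (by omega)]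
      simp

lemma Tw_binom (K j : ℕ) : Tw (K+1) 0 j = ((j:ℤ)+1)^(K+1) - (j:ℤ)^(K+1) := by
  have hb : ((j:ℤ)+1)^(K+1) = ∑ ℓ ∈ Finset.range (K+2), (j:ℤ)^ℓ * (((K+1).choose ℓ : ℕ) : ℤ) := by
    rw [add_pow]
    simp
  rw [hb, Finset.sum_range_succ, Nat.choose_self]
  unfold Tw
  rw [Nat.zero_add (K+1)]
  have : ∀ ℓ ∈ Finset.range (K+1),
      (((K+1).choose ℓ : ℕ) : ℤ) * (j:ℤ)^ℓ = (j:ℤ)^ℓ * (((K+1).choose ℓ : ℕ) : ℤ) := by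
    intro ℓ _; ring
  rw [Finset.sum_congr rfl this]
  push_cast
  ring

lemma binom_Tw (K e : ℕ) :
    ∑ i ∈ Finset.range (e+2), (-1:ℤ)^i * ((K+2).choose i : ℤ) * ((e+1-i : ℕ) : ℤ)^(K+1)
      = Gg (K+1) 0 e := by
  rw [pascal_sum (K+1) e (fun j => ((j:ℕ):ℤ)^(K+1))]
  rw [Finset.sum_range_succ]
  rw [show e + 1 - (e+1) = 0 by omega]
  simp only [Nat.cast_zero, zero_pow (Nat.succ_ne_zero K), mul_zero, add_zero]
  rw [← Finset.sum_sub_distrib]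
  unfold Gg
  apply Finset.sum_congr rfl
  intro i hi
  rw [Finset.mem_range] at hi
  rw [Tw_binom]
  have h1 : e + 1 - i = (e - i) + 1 := by omega
  rw [h1]
  push_cast
  ring

lemma GgRec (K m e : ℕ) :
    Gg (K+2) m (e+1) = ((K+m+2).choose (m+1) : ℤ) * Gg (K+1) 0 e
      + Gg (K+1) (m+1) (e+1) - Gg (K+1) (m+1) e := by
  have hG : Gg (K+2) m (e+1)
      = ∑ i ∈ Finset.range (e+2), (-1:ℤ)^i * ((K+2).choose i : ℤ)
          * (Tw (K+1) (m+1) (e+1-i) + ((m+K+2).choose (K+1) : ℤ) * (((e+1-i : ℕ)):ℤ)^(K+1)) := by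
    unfold Gg
    exact Finset.sum_congr rfl (fun i _ => by rw [Tw_split])
  rw [hG]
  have hsplit : ∑ i ∈ Finset.range (e+2), (-1:ℤ)^i * ((K+2).choose i : ℤ)
          * (Tw (K+1) (m+1) (e+1-i) + ((m+K+2).choose (K+1) : ℤ) * (((e+1-i : ℕ)):ℤ)^(K+1))
      = (∑ i ∈ Finset.range (e+2), (-1:ℤ)^i * ((K+2).choose i : ℤ) * Tw (K+1) (m+1) (e+1-i))
        + ((m+K+2).choose (K+1) : ℤ) *
          ∑ i ∈ Finset.range (e+2), (-1:ℤ)^i * ((K+2).choose i : ℤ) * ((e+1-i : ℕ) : ℤ)^(K+1) := by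
    rw [Finset.mul_sum, ← Finset.sum_add_distrib]
    exact Finset.sum_congr rfl (fun i _ => by ring)
  rw [hsplit]
  rw [binom_Tw]
  rw [pascal_sum (K+1) e (fun j => Tw (K+1) (m+1) j)]
  have hcoef : ((m+K+2).choose (K+1) : ℤ) = ((K+m+2).choose (m+1) : ℤ) := by
    have h1 : m + K + 2 = K + m + 2 := by omega
    rw [h1]
    have h2 : K + m + 2 - (m+1) = K + 1 := by omega
    rw [← h2, Nat.choose_symm (by omega)]
  rw [hcoef]
  unfold Gg
  ring
lemma Ff_eq_Gg : ∀ n m d : ℕ, Ff n m (d : ℤ) = Gg (n+1) m d := by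
  intro n
  induction n with
  | zero =>
    intro m d
    rw [Ff_base, Gg_one]
    have h : ((d:ℕ):ℤ) = 0 ↔ d = 0 := by omega
    rw [if_congr h rfl rfl]
  | succ n ih =>
    intro m d
    rw [Ff_rec]
    cases d with
    | zero =>
      have h1 : ((0:ℕ):ℤ) - 1 < 0 := by norm_num
      rw [Ff_neg _ _ _ h1, Ff_neg _ _ _ h1]
      rw [ih (m+1) 0]
      rw [Gg_zero, Gg_zero]
      ring
    | succ e =>
      have h1 : ((e+1:ℕ):ℤ) - 1 = ((e:ℕ):ℤ) := by push_cast; ring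
      rw [h1, ih 0 e, ih (m+1) (e+1), ih (m+1) e]
      exact (GgRec n m e).symm
lemma asc_prod (k : ℕ) : ∀ m : ℕ, ∏ i ∈ Finset.range m, (k+i) = k.ascFactorial m := by
  intro m
  induction m with
  | zero => simp
  | succ e ih =>
    rw [Finset.prod_range_succ, ih, Nat.ascFactorial_succ, Nat.mul_comm]

lemma A_eq (n' : ℕ) (d : ℤ) (k : ℕ) :
    A (n'+1) d k = (Finset.univ.filter (fun π : Equiv.Perm (Fin (n'+1)) =>
      (descents (n'+1) π : ℤ) = d ∧ ((π 0 : Fin (n'+1)) : ℕ) + 1 = k)).card := by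
  unfold A
  congr 1
  apply Finset.filter_congr
  intro π _
  constructor
  · rintro ⟨h1, i, hi, hq⟩
    have hz : i = 0 := Fin.ext (by simpa using hi)
    subst hz
    exact ⟨h1, hq⟩
  · rintro ⟨h1, hq⟩
    exact ⟨h1, 0, by simp, hq⟩

lemma lhs_eq (n' m : ℕ) (d : ℤ) :
    ∑ k ∈ Finset.Icc 1 (n'+1), ((Nat.factorial m * (k+m-1).choose m : ℕ) : ℤ) * A (n'+1) d k
      = (Nat.factorial m : ℤ) * Ff n' m d := by
  unfold Ff
  rw [Finset.mul_sum]
  have hL : ∀ k ∈ Finset.Icc 1 (n'+1),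
      ((Nat.factorial m * (k+m-1).choose m : ℕ) : ℤ) * A (n'+1) d k
        = ∑ π : Equiv.Perm (Fin (n'+1)),
            if (descents (n'+1) π : ℤ) = d ∧ ((π 0 : Fin (n'+1)) : ℕ) + 1 = k
            then ((Nat.factorial m * (k+m-1).choose m : ℕ) : ℤ) else 0 := by
    intro k _
    rw [A_eq, Finset.card_filter]
    push_cast
    rw [Finset.mul_sum]
    apply Finset.sum_congr rfl
    intro π _
    split_ifs <;> ring
  rw [Finset.sum_congr rfl hL, Finset.sum_comm]
  apply Finset.sum_congr rfl
  intro π _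
  by_cases hC : (descents (n'+1) π : ℤ) = d
  · simp only [hC, true_and, if_true]
    have ha : ((π 0 : Fin (n'+1)) : ℕ) + 1 ∈ Finset.Icc 1 (n'+1) := by
      rw [Finset.mem_Icc]
      have := (π 0).isLt
      omega
    rw [Finset.sum_eq_single (((π 0 : Fin (n'+1)) : ℕ) + 1)]
    · rw [if_pos rfl]
      rw [show ((π 0 : Fin (n'+1)) : ℕ) + 1 + m - 1 = ((π 0 : Fin (n'+1)) : ℕ) + m by omega]
      push_cast
      ring
    · intro b _ hb
      rw [if_neg (fun h => hb h.symm)]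
    · intro hab
      exact absurd ha hab
  · simp only [hC, false_and, if_false, Finset.sum_const_zero]
    ring


theorem stmt10 (n : ℕ) (hn : 1 ≤ n) (d : ℕ) (hd : d ≤ n - 1) (m : ℕ) (hm : 1 ≤ m) :
    ∑ k ∈ Finset.Icc 1 n, (∏ i ∈ Finset.range m, ((k : ℤ) + i)) * A n (d : ℤ) k
      = (Nat.factorial m : ℤ) *
        ∑ j ∈ Finset.range (d + 1),
          (-1 : ℤ) ^ (d - j) * (n.choose (d - j) : ℤ) *
            ∑ ℓ ∈ Finset.range n, ((m + n).choose ℓ : ℤ) * (j : ℤ) ^ ℓ := by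
  obtain ⟨n', rfl⟩ : ∃ n', n = n' + 1 := ⟨n - 1, by omega⟩
  have hprod : ∀ k ∈ Finset.Icc 1 (n'+1),
      (∏ i ∈ Finset.range m, ((k:ℤ) + i)) * A (n'+1) (d:ℤ) k
        = ((Nat.factorial m * (k+m-1).choose m : ℕ) : ℤ) * A (n'+1) (d:ℤ) k := by
    intro k hk
    rw [Finset.mem_Icc] at hk
    congr 1
    calc ∏ i ∈ Finset.range m, ((k:ℤ) + (i:ℕ))
        = ((∏ i ∈ Finset.range m, (k+i) : ℕ) : ℤ) := by push_cast; rfl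
      _ = ((k.ascFactorial m : ℕ) : ℤ) := by rw [asc_prod]
      _ = _ := by rw [Nat.ascFactorial_eq_factorial_mul_choose']
  rw [Finset.sum_congr rfl hprod, lhs_eq, Ff_eq_Gg]
  congr 1
  show Gg (n'+1) m d
      = ∑ j ∈ Finset.range (d + 1),
          (-1 : ℤ) ^ (d - j) * (((n'+1).choose (d - j)) : ℤ) * Tw (n'+1) m j
  rw [← Finset.sum_range_reflect
    (fun j => (-1:ℤ)^(d-j) * (((n'+1).choose (d-j)):ℤ) * Tw (n'+1) m j) (d+1)]
  unfold Gg
  apply Finset.sum_congr rfl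
  intro i hi
  rw [Finset.mem_range] at hi
  rw [show d + 1 - 1 - i = d - i by omega]
  rw [show d - (d - i) = i by omega]
end
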